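/- Let d ≥ 2 and let U = SC be the Grover walk on ℤ^d. Then localization occurs: there exists Ψ₀ ∈ ℓ²(ℤ^d × A) with ‖Ψ₀‖ = 1 such that limsup_{n→∞} Σ_{a∈A} |(UⁿΨ₀)(0,a)|² > 0, where 0 denotes the origin of ℤ^d. -/

import Mathlib

open Finset

/-- sites of the `d`-dimensional integer lattice -/
abbrev Site (d : ℕ) := Fin d → ℤ

/-- labels of the `2d` arcs leaving each site: a direction `j` and a sign (`true ↔ +1`) -/
abbrev ArcLabel (d : ℕ) := Fin d × Bool

/-- the sign `σ ∈ {+1, −1}` of an arc label -/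
def sgn (b : Bool) : ℤ := if b then 1 else -1

/-- the endpoint `x + σ e_j` of the arc `(x, (j, σ))` -/
def stepSite {d : ℕ} (x : Site d) (j : Fin d) (b : Bool) : Site d :=
  x + Pi.single j (sgn b)

/-- the flip-flop shift `(Sψ)(x,(j,σ)) = ψ(x + σ e_j, (j, −σ))` -/
def groverShift {d : ℕ} (ψ : Site d × ArcLabel d → ℂ) : Site d × ArcLabel d → ℂ :=
  fun p => ψ (stepSite p.1 p.2.1 p.2.2, (p.2.1, !p.2.2))

/-- the sitewise Grover coin `(Cψ)(x,a) = (1/d) ∑_{b} ψ(x,b) − ψ(x,a)` -/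
noncomputable def groverCoin {d : ℕ} (ψ : Site d × ArcLabel d → ℂ) : Site d × ArcLabel d → ℂ :=
  fun p => (1 / (d : ℂ)) * (∑ b : ArcLabel d, ψ (p.1, b)) - ψ p

/-- the Grover walk `U = SC` on `ℤ^d` -/
noncomputable def groverU {d : ℕ} (ψ : Site d × ArcLabel d → ℂ) : Site d × ArcLabel d → ℂ :=
  groverShift (groverCoin ψ)

/-- the standard basis vector `δ_q` of `ℓ²(ℤ^d × A)` -/
noncomputable def deltaPt {d : ℕ} (q : Site d × ArcLabel d) : Site d × ArcLabel d → ℂ :=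
  fun p => if p = q then 1 else 0


lemma sgn_not (c : Bool) : sgn (!c) = - sgn c := by cases c <;> simp [sgn]

lemma step_step {d : ℕ} (x : Site d) (i : Fin d) (c : Bool) :
    stepSite (stepSite x i c) i (!c) = x := by
  simp [stepSite, sgn_not, add_assoc, ← Pi.single_add]

lemma sum_delta {d : ℕ} (q : Site d × ArcLabel d) (x : Site d) :
    ∑ b : ArcLabel d, deltaPt q (x, b) = if x = q.1 then 1 else 0 := by
  unfold deltaPt
  obtain ⟨s, a⟩ := q
  simp only [Prod.mk.injEq]
  by_cases hx : x = s
  · subst hx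
    simp
  · simp [hx]

lemma shift_delta {d : ℕ} (s : Site d) (i : Fin d) (c : Bool) :
    groverShift (deltaPt (s, (i, c))) = deltaPt (stepSite s i c, (i, !c)) := by
  funext p
  obtain ⟨x, j, b⟩ := p
  unfold groverShift deltaPt
  simp only [Prod.mk.injEq]
  congr 1
  simp only [eq_iff_iff]
  constructor
  · rintro ⟨h1, rfl, h3⟩
    have hb : b = !c := by cases b <;> cases c <;> simp_all
    subst hb
    have h := step_step x j (!c)
    rw [h1, Bool.not_not] at h
    exact ⟨h.symm, rfl, rfl⟩
  · rintro ⟨rfl, rfl, rfl⟩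
    exact ⟨step_step s j c, rfl, by simp⟩

noncomputable def pairFn {d : ℕ} (s : Site d) (i : Fin d) : Site d × ArcLabel d → ℂ :=
  fun p => deltaPt (s,(i,true)) p + deltaPt (stepSite s i true, (i,false)) p

lemma shift_pair {d : ℕ} (s : Site d) (i : Fin d) :
    groverShift (pairFn s i) = pairFn s i := by
  funext p
  have h1 := congrFun (shift_delta s i true) p
  have h2 := congrFun (shift_delta (stepSite s i true) i false) p
  have h3 : stepSite (stepSite s i true) i false = s := by
    have := step_step s i true; simpa using this
  rw [h3] at h2
  show pairFn s i (stepSite p.1 p.2.1 p.2.2, (p.2.1, !p.2.2)) = _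
  unfold pairFn
  unfold groverShift at h1 h2
  rw [h1, h2]
  simp [add_comm]

noncomputable def psi {d : ℕ} (i0 i1 : Fin d) : Site d × ArcLabel d → ℂ :=
  fun p => pairFn 0 i0 p + pairFn (Pi.single i1 1) i0 p
    - pairFn 0 i1 p - pairFn (Pi.single i0 1) i1 p

lemma shift_psi {d : ℕ} (i0 i1 : Fin d) :
    groverShift (psi i0 i1) = psi i0 i1 := by
  funext p
  have h1 := congrFun (shift_pair (0 : Site d) i0) p
  have h2 := congrFun (shift_pair (Pi.single i1 1 : Site d) i0) p
  have h3 := congrFun (shift_pair (0 : Site d) i1) p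
  have h4 := congrFun (shift_pair (Pi.single i0 1 : Site d) i1) p
  show psi i0 i1 (stepSite p.1 p.2.1 p.2.2, (p.2.1, !p.2.2)) = _
  unfold psi
  unfold groverShift at h1 h2 h3 h4
  rw [h1, h2, h3, h4]

lemma sum_pair {d : ℕ} (s : Site d) (i : Fin d) (x : Site d) :
    ∑ b : ArcLabel d, pairFn s i (x, b)
      = (if x = s then 1 else 0) + (if x = stepSite s i true then 1 else 0) := by
  simp [pairFn, Finset.sum_add_distrib, sum_delta]

lemma step_true {d : ℕ} (x : Site d) (j : Fin d) :
    stepSite x j true = x + Pi.single j 1 := by simp [stepSite, sgn]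

lemma coin_psi {d : ℕ} (i0 i1 : Fin d) :
    groverCoin (psi i0 i1) = fun p => - psi i0 i1 p := by
  have hsum : ∀ x : Site d, ∑ b : ArcLabel d, psi i0 i1 (x, b) = 0 := by
    intro x
    unfold psi
    simp only [Finset.sum_add_distrib, Finset.sum_sub_distrib, sum_pair, step_true,
      zero_add, add_comm (Pi.single i1 (1:ℤ) : Site d) (Pi.single i0 (1:ℤ) : Site d)]
    ring
  funext p
  simp [groverCoin, hsum p.1]

lemma u_psi {d : ℕ} (i0 i1 : Fin d) :
    groverU (psi i0 i1) = fun p => - psi i0 i1 p := by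
  unfold groverU
  rw [coin_psi]
  have : (fun p => - psi i0 i1 p) = fun p => -1 * psi i0 i1 p := by funext p; ring
  funext p
  show (- psi i0 i1 ·) (stepSite p.1 p.2.1 p.2.2, (p.2.1, !p.2.2)) = _
  have := congrFun (shift_psi i0 i1) p
  unfold groverShift at this
  simp only at this ⊢
  rw [this]

lemma u_neg {d : ℕ} (f : Site d × ArcLabel d → ℂ) :
    groverU (fun p => - f p) = fun p => - groverU f p := by
  funext p
  simp [groverU, groverShift, groverCoin]
  ring

lemma u_smul {d : ℕ} (k : ℂ) (f : Site d × ArcLabel d → ℂ) :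
    groverU (fun p => k * f p) = fun p => k * groverU f p := by
  funext p
  simp only [groverU, groverShift, groverCoin]
  rw [← Finset.mul_sum]
  ring

lemma main_aux {d : ℕ} (i0 i1 : Fin d) (h01 : i0 ≠ i1) :
    ∃ Ψ₀ : Site d × ArcLabel d → ℂ,
      (∑' p : Site d × ArcLabel d, ‖Ψ₀ p‖ ^ 2) = 1 ∧
      0 < Filter.limsup
          (fun n : ℕ => ∑ a : ArcLabel d, ‖(groverU^[n] Ψ₀) (0, a)‖ ^ 2)
          Filter.atTop := by
  have h10 : i1 ≠ i0 := h01.symm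
  -- site disequalities
  have n1 : (0 : Site d) ≠ Pi.single i0 1 := fun h => by
    have := congrFun h i0; simp [Pi.single_eq_same] at this
  have n2 : (Pi.single i0 1 : Site d) ≠ 0 := n1.symm
  have n3 : (0 : Site d) ≠ Pi.single i1 1 := fun h => by
    have := congrFun h i1; simp [Pi.single_eq_same] at this
  have n4 : (Pi.single i1 1 : Site d) ≠ 0 := n3.symm
  have n5 : (0 : Site d) ≠ Pi.single i0 1 + Pi.single i1 1 := fun h => by
    have := congrFun h i0; simp [Pi.single_eq_same, Pi.single_eq_of_ne h01, Pi.single_eq_of_ne h10] at this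
  have n6 : (Pi.single i0 1 + Pi.single i1 1 : Site d) ≠ 0 := n5.symm
  have n7 : (Pi.single i0 1 : Site d) ≠ Pi.single i1 1 := fun h => by
    have := congrFun h i0; simp [Pi.single_eq_same, Pi.single_eq_of_ne h01, Pi.single_eq_of_ne h10] at this
  have n8 : (Pi.single i1 1 : Site d) ≠ Pi.single i0 1 := n7.symm
  have n9 : (Pi.single i0 1 : Site d) ≠ Pi.single i0 1 + Pi.single i1 1 := fun h => by
    have := congrFun h i1; simp [Pi.single_eq_same, Pi.single_eq_of_ne h01, Pi.single_eq_of_ne h10] at this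
  have n10 : (Pi.single i0 1 + Pi.single i1 1 : Site d) ≠ Pi.single i0 1 := n9.symm
  have n11 : (Pi.single i1 1 : Site d) ≠ Pi.single i0 1 + Pi.single i1 1 := fun h => by
    have := congrFun h i0; simp [Pi.single_eq_same, Pi.single_eq_of_ne h01, Pi.single_eq_of_ne h10] at this
  have n12 : (Pi.single i0 1 + Pi.single i1 1 : Site d) ≠ Pi.single i1 1 := n11.symm
  have hcomm : (Pi.single i1 1 + Pi.single i0 1 : Site d) = Pi.single i0 1 + Pi.single i1 1 :=
    add_comm _ _
  -- the values of psi at the eight support points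
  have v1 : psi i0 i1 (0, (i0, true)) = 1 := by
    simp [psi, pairFn, deltaPt, step_true, zero_add, hcomm, Prod.mk.injEq,
      n1, n2, n3, n4, n5, n6, n7, n8, n9, n10, n11, n12, h01, h10]
  have v2 : psi i0 i1 (Pi.single i0 1, (i0, false)) = 1 := by
    simp [psi, pairFn, deltaPt, step_true, zero_add, hcomm, Prod.mk.injEq,
      n1, n2, n3, n4, n5, n6, n7, n8, n9, n10, n11, n12, h01, h10]
  have v3 : psi i0 i1 (Pi.single i1 1, (i0, true)) = 1 := by
    simp [psi, pairFn, deltaPt, step_true, zero_add, hcomm, Prod.mk.injEq,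
      n1, n2, n3, n4, n5, n6, n7, n8, n9, n10, n11, n12, h01, h10]
  have v4 : psi i0 i1 (Pi.single i0 1 + Pi.single i1 1, (i0, false)) = 1 := by
    simp [psi, pairFn, deltaPt, step_true, zero_add, hcomm, Prod.mk.injEq,
      n1, n2, n3, n4, n5, n6, n7, n8, n9, n10, n11, n12, h01, h10]
  have v5 : psi i0 i1 (0, (i1, true)) = -1 := by
    simp [psi, pairFn, deltaPt, step_true, zero_add, hcomm, Prod.mk.injEq,
      n1, n2, n3, n4, n5, n6, n7, n8, n9, n10, n11, n12, h01, h10]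
  have v6 : psi i0 i1 (Pi.single i1 1, (i1, false)) = -1 := by
    simp [psi, pairFn, deltaPt, step_true, zero_add, hcomm, Prod.mk.injEq,
      n1, n2, n3, n4, n5, n6, n7, n8, n9, n10, n11, n12, h01, h10]
  have v7 : psi i0 i1 (Pi.single i0 1, (i1, true)) = -1 := by
    simp [psi, pairFn, deltaPt, step_true, zero_add, hcomm, Prod.mk.injEq,
      n1, n2, n3, n4, n5, n6, n7, n8, n9, n10, n11, n12, h01, h10]
  have v8 : psi i0 i1 (Pi.single i0 1 + Pi.single i1 1, (i1, false)) = -1 := by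
    simp [psi, pairFn, deltaPt, step_true, zero_add, hcomm, Prod.mk.injEq,
      n1, n2, n3, n4, n5, n6, n7, n8, n9, n10, n11, n12, h01, h10]
    -- the normalized initial state
  refine ⟨fun p => (((Real.sqrt 8)⁻¹ : ℝ) : ℂ) * psi i0 i1 p, ?_, ?_⟩
  · -- norm one
    have habs : ∀ p : Site d × ArcLabel d,
        ‖(((Real.sqrt 8)⁻¹ : ℝ) : ℂ) * psi i0 i1 p‖ ^ 2
          = (8:ℝ)⁻¹ * ‖psi i0 i1 p‖ ^ 2 := by
      intro p
      rw [norm_mul, mul_pow, Complex.norm_real, Real.norm_eq_abs,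
        abs_of_nonneg (by positivity : (0:ℝ) ≤ (Real.sqrt 8)⁻¹), inv_pow,
        Real.sq_sqrt (by norm_num : (0:ℝ) ≤ 8)]
    have hzero : ∀ p ∉ ({((0 : Site d), (i0, true)), ((Pi.single i0 1 : Site d), (i0, false)), ((Pi.single i1 1 : Site d), (i0, true)), ((Pi.single i0 1 + Pi.single i1 1 : Site d), (i0, false)), ((0 : Site d), (i1, true)), ((Pi.single i1 1 : Site d), (i1, false)), ((Pi.single i0 1 : Site d), (i1, true)), ((Pi.single i0 1 + Pi.single i1 1 : Site d), (i1, false))} : Finset (Site d × ArcLabel d)),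
        ‖(((Real.sqrt 8)⁻¹ : ℝ) : ℂ) * psi i0 i1 p‖ ^ 2 = 0 := by
      intro p hp
      simp only [Finset.mem_insert, Finset.mem_singleton, not_or] at hp
      obtain ⟨hp1, hp2, hp3, hp4, hp5, hp6, hp7, hp8⟩ := hp
      have hψ : psi i0 i1 p = 0 := by
        simp [psi, pairFn, deltaPt, step_true, zero_add, hcomm,
          hp1, hp2, hp3, hp4, hp5, hp6, hp7, hp8]
      simp [hψ]
    rw [tsum_eq_sum hzero]
    have hm1 : ((0 : Site d), (i0, true)) ∉ ({((Pi.single i0 1 : Site d), (i0, false)), ((Pi.single i1 1 : Site d), (i0, true)), ((Pi.single i0 1 + Pi.single i1 1 : Site d), (i0, false)), ((0 : Site d), (i1, true)), ((Pi.single i1 1 : Site d), (i1, false)), ((Pi.single i0 1 : Site d), (i1, true)), ((Pi.single i0 1 + Pi.single i1 1 : Site d), (i1, false))} : Finset (Site d × ArcLabel d)) := by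
      simp [Prod.mk.injEq, n1, n2, n3, n4, n5, n6, n7, n8, n9, n10, n11, n12, h01, h10]
    rw [Finset.sum_insert hm1]
    have hm2 : ((Pi.single i0 1 : Site d), (i0, false)) ∉ ({((Pi.single i1 1 : Site d), (i0, true)), ((Pi.single i0 1 + Pi.single i1 1 : Site d), (i0, false)), ((0 : Site d), (i1, true)), ((Pi.single i1 1 : Site d), (i1, false)), ((Pi.single i0 1 : Site d), (i1, true)), ((Pi.single i0 1 + Pi.single i1 1 : Site d), (i1, false))} : Finset (Site d × ArcLabel d)) := by
      simp [Prod.mk.injEq, n1, n2, n3, n4, n5, n6, n7, n8, n9, n10, n11, n12, h01, h10]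
    rw [Finset.sum_insert hm2]
    have hm3 : ((Pi.single i1 1 : Site d), (i0, true)) ∉ ({((Pi.single i0 1 + Pi.single i1 1 : Site d), (i0, false)), ((0 : Site d), (i1, true)), ((Pi.single i1 1 : Site d), (i1, false)), ((Pi.single i0 1 : Site d), (i1, true)), ((Pi.single i0 1 + Pi.single i1 1 : Site d), (i1, false))} : Finset (Site d × ArcLabel d)) := by
      simp [Prod.mk.injEq, n1, n2, n3, n4, n5, n6, n7, n8, n9, n10, n11, n12, h01, h10]
    rw [Finset.sum_insert hm3]
    have hm4 : ((Pi.single i0 1 + Pi.single i1 1 : Site d), (i0, false)) ∉ ({((0 : Site d), (i1, true)), ((Pi.single i1 1 : Site d), (i1, false)), ((Pi.single i0 1 : Site d), (i1, true)), ((Pi.single i0 1 + Pi.single i1 1 : Site d), (i1, false))} : Finset (Site d × ArcLabel d)) := by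
      simp [Prod.mk.injEq, n1, n2, n3, n4, n5, n6, n7, n8, n9, n10, n11, n12, h01, h10]
    rw [Finset.sum_insert hm4]
    have hm5 : ((0 : Site d), (i1, true)) ∉ ({((Pi.single i1 1 : Site d), (i1, false)), ((Pi.single i0 1 : Site d), (i1, true)), ((Pi.single i0 1 + Pi.single i1 1 : Site d), (i1, false))} : Finset (Site d × ArcLabel d)) := by
      simp [Prod.mk.injEq, n1, n2, n3, n4, n5, n6, n7, n8, n9, n10, n11, n12, h01, h10]
    rw [Finset.sum_insert hm5]
    have hm6 : ((Pi.single i1 1 : Site d), (i1, false)) ∉ ({((Pi.single i0 1 : Site d), (i1, true)), ((Pi.single i0 1 + Pi.single i1 1 : Site d), (i1, false))} : Finset (Site d × ArcLabel d)) := by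
      simp [Prod.mk.injEq, n1, n2, n3, n4, n5, n6, n7, n8, n9, n10, n11, n12, h01, h10]
    rw [Finset.sum_insert hm6]
    have hm7 : ((Pi.single i0 1 : Site d), (i1, true)) ∉ ({((Pi.single i0 1 + Pi.single i1 1 : Site d), (i1, false))} : Finset (Site d × ArcLabel d)) := by
      simp [Prod.mk.injEq, n1, n2, n3, n4, n5, n6, n7, n8, n9, n10, n11, n12, h01, h10]
    rw [Finset.sum_insert hm7]
    rw [Finset.sum_singleton]
    simp only [habs, v1, v2, v3, v4, v5, v6, v7, v8]
    norm_num
  · -- limsup positive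
    have hU : groverU (fun p => (((Real.sqrt 8)⁻¹ : ℝ) : ℂ) * psi i0 i1 p)
        = fun p => - ((((Real.sqrt 8)⁻¹ : ℝ) : ℂ) * psi i0 i1 p) := by
      rw [u_smul]
      funext p
      rw [u_psi]
      simp
    have hiter : ∀ n : ℕ,
        groverU^[n] (fun p => (((Real.sqrt 8)⁻¹ : ℝ) : ℂ) * psi i0 i1 p)
          = (fun p => (((Real.sqrt 8)⁻¹ : ℝ) : ℂ) * psi i0 i1 p)
        ∨ groverU^[n] (fun p => (((Real.sqrt 8)⁻¹ : ℝ) : ℂ) * psi i0 i1 p)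
          = fun p => - ((((Real.sqrt 8)⁻¹ : ℝ) : ℂ) * psi i0 i1 p) := by
      intro n
      induction n with
      | zero => left; rfl
      | succ n ih =>
        rw [Function.iterate_succ_apply']
        rcases ih with h | h
        · right; rw [h, hU]
        · left
          rw [h]
          have hn : groverU (fun p => - ((((Real.sqrt 8)⁻¹ : ℝ) : ℂ) * psi i0 i1 p))
              = fun p => - groverU (fun p => (((Real.sqrt 8)⁻¹ : ℝ) : ℂ) * psi i0 i1 p) p :=
            u_neg _
          rw [hn]
          funext p
          rw [hU]
          simp
    have hconst : (fun n : ℕ => ∑ a : ArcLabel d,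
        ‖(groverU^[n] (fun p => (((Real.sqrt 8)⁻¹ : ℝ) : ℂ) * psi i0 i1 p)) (0, a)‖ ^ 2)
        = fun _ : ℕ => ∑ a : ArcLabel d,
            ‖(((Real.sqrt 8)⁻¹ : ℝ) : ℂ) * psi i0 i1 (0, a)‖ ^ 2 := by
      funext n
      rcases hiter n with h | h <;> rw [h] <;> simp
    rw [hconst, Filter.limsup_const]
    have habs : ‖(((Real.sqrt 8)⁻¹ : ℝ) : ℂ) * psi i0 i1 (0, (i0, true))‖ ^ 2
        = (8:ℝ)⁻¹ := by
      rw [v1, mul_one, Complex.norm_real, Real.norm_eq_abs,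
        abs_of_nonneg (by positivity : (0:ℝ) ≤ (Real.sqrt 8)⁻¹), inv_pow,
        Real.sq_sqrt (by norm_num : (0:ℝ) ≤ 8)]
    have hle : (8:ℝ)⁻¹ ≤ ∑ a : ArcLabel d,
        ‖(((Real.sqrt 8)⁻¹ : ℝ) : ℂ) * psi i0 i1 (0, a)‖ ^ 2 := by
      rw [← habs]
      exact Finset.single_le_sum
        (f := fun a : ArcLabel d =>
          ‖(((Real.sqrt 8)⁻¹ : ℝ) : ℂ) * psi i0 i1 (0, a)‖ ^ 2)
        (fun a _ => sq_nonneg _) (Finset.mem_univ ((i0, true)))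
    have : (0:ℝ) < (8:ℝ)⁻¹ := by norm_num
    linarith

/-- For `d ≥ 2`, localization occurs for the Grover walk on `ℤ^d`: there is a
unit initial state `Ψ₀ ∈ ℓ²(ℤ^d × A)` such that the finding probability at the origin does not
vanish in the limit, `limsup_{n→∞} ∑_{a∈A} |(UⁿΨ₀)(0,a)|² > 0`. -/
theorem grover_zd_localization (d : ℕ) (hd : 2 ≤ d) :
    ∃ Ψ₀ : Site d × ArcLabel d → ℂ,
      (∑' p : Site d × ArcLabel d, ‖Ψ₀ p‖ ^ 2) = 1 ∧
      0 < Filter.limsup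
          (fun n : ℕ => ∑ a : ArcLabel d, ‖(groverU^[n] Ψ₀) (0, a)‖ ^ 2)
          Filter.atTop := by
  exact main_aux ⟨0, by omega⟩ ⟨1, by omega⟩ (Fin.ne_of_val_ne (by norm_num))
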